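/- Let m ≥ 3 be odd, ω = e^{2πi/m}, q = 2cos(π/(2m)). For f(x_1) = a x_1 with a ∈ Z/mZ, the sum S(f) = (1/2) Σ_{x_1 ∈ {-1,1}} x_1 ω^{a x_1} satisfies |S(f)| ≤ q/2, with equality if and only if a ≡ ±⌊(m+1)/4⌋ mod m. -/

import Mathlib

/-- The one-variable normalized sum `S(f) = (1/2) Σ_{x ∈ {-1,1}} x ω^{a x}`. -/
noncomputable def oneVarSum (m : ℕ) (a : ZMod m) : ℂ :=
  (1 / 2) * ∑ x : Bool,
    ((if x then (1 : ℤ) else -1 : ℤ) : ℂ) *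
      Complex.exp (2 * (Real.pi : ℂ) * Complex.I / m) ^ ((a.val : ℤ) * (if x then 1 else -1))

open Real

lemma oneVarSum_eq (m : ℕ) [NeZero m] (a : ZMod m) :
    oneVarSum m a = Complex.I * Real.sin (2 * Real.pi * a.val / m) := by
  unfold oneVarSum
  rw [Fintype.sum_bool]
  simp only [if_true, Bool.false_eq_true, if_false, mul_one, mul_neg_one, Int.cast_one,
    Int.cast_neg]
  rw [← Complex.exp_int_mul, ← Complex.exp_int_mul]
  have h1 : ((a.val : ℤ) : ℂ) * (2 * (Real.pi : ℂ) * Complex.I / m)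
      = ((2 * Real.pi * a.val / m : ℝ) : ℂ) * Complex.I := by
    push_cast; ring
  have h2 : ((-(a.val : ℤ) : ℤ) : ℂ) * (2 * (Real.pi : ℂ) * Complex.I / m)
      = ((-(2 * Real.pi * a.val / m) : ℝ) : ℂ) * Complex.I := by
    push_cast; ring
  rw [h1, h2, Complex.exp_mul_I, Complex.exp_mul_I]
  push_cast
  simp only [Complex.cos_neg, Complex.sin_neg]
  ring

lemma k0_mul (m : ℕ) [NeZero m] (hm : 3 ≤ m) (hodd : Odd m) :
    (4 * (((m+1)/4 : ℕ) : ZMod m) = -1) ∨ (4 * (((m+1)/4 : ℕ) : ZMod m) = 1) := by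
  have h2 : m % 2 = 1 := Nat.odd_iff.mp hodd
  have hms : ((m : ℕ) : ZMod m) = 0 := ZMod.natCast_self m
  have hcast : ∀ k : ℕ, 4 * ((k : ℕ) : ZMod m) = ((4 * k : ℕ) : ZMod m) := by
    intro k; push_cast; ring
  by_cases h4 : m % 4 = 1
  · left
    have he : 4 * ((m+1)/4) = m - 1 := by omega
    rw [hcast, he]
    have h1 : ((m - 1 : ℕ) : ZMod m) = ((m : ℕ) : ZMod m) - 1 := by
      rw [Nat.cast_sub (by omega)]; push_cast; ring
    rw [h1, hms]; ring
  · right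
    have h4' : m % 4 = 3 := by omega
    have he : 4 * ((m+1)/4) = m + 1 := by omega
    rw [hcast, he]
    push_cast [hms]
    ring

lemma eq_char (m : ℕ) [NeZero m] (hm : 3 ≤ m) (hodd : Odd m)
    (hk : (4 * (((m+1)/4 : ℕ) : ZMod m) = -1) ∨ (4 * (((m+1)/4 : ℕ) : ZMod m) = 1))
    (a : ZMod m) :
    (2*a).valMinAbs.natAbs = m / 2 ↔
      (a = (((m+1)/4 : ℕ) : ZMod m) ∨ a = -(((m+1)/4 : ℕ) : ZMod m)) := by
  have h2 : m % 2 = 1 := Nat.odd_iff.mp hodd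
  have hu : IsUnit ((4 : ℕ) : ZMod m) := by
    rw [ZMod.isUnit_iff_coprime]
    have : Nat.Coprime 2 m := Nat.coprime_two_left.mpr hodd
    simpa using this.pow_left 2
  have hu4 : IsUnit (4 : ZMod m) := by simpa using hu
  set k0 : ZMod m := (((m+1)/4 : ℕ) : ZMod m) with hk0
  have step1 : (2*a).valMinAbs.natAbs = m / 2 ↔ (4*a = -1 ∨ 4*a = 1) := by
    set r : ℤ := (2*a).valMinAbs with hrdef
    have hr : ((r : ℤ) : ZMod m) = 2*a := ZMod.coe_valMinAbs _
    have hb : r.natAbs ≤ m / 2 := ZMod.natAbs_valMinAbs_le _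
    have h2r : ((2*r : ℤ) : ZMod m) = 4*a := by push_cast [hr]; ring
    have habs : |r| ≤ ((m/2 : ℕ) : ℤ) := by
      rw [Int.abs_eq_natAbs]; exact_mod_cast hb
    obtain ⟨hrlo, hrhi⟩ := abs_le.mp habs
    have hmhalf : ((m/2 : ℕ) : ℤ) * 2 = m - 1 := by omega
    constructor
    · intro h
      rcases Int.natAbs_eq_iff.mp h with h' | h'
      · left
        rw [h'] at h2r
        rw [← h2r]
        have : (2 * ((m/2 : ℕ) : ℤ)) = (m : ℤ) - 1 := by omega
        rw [this]
        push_cast [ZMod.natCast_self]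
        ring
      · right
        rw [h'] at h2r
        rw [← h2r]
        have : (2 * (-((m/2 : ℕ) : ℤ))) = -((m : ℤ) - 1) := by omega
        rw [this]
        push_cast [ZMod.natCast_self]
        ring
    · intro h
      have hmpos : (0:ℤ) < m := by exact_mod_cast (by omega : 0 < m)
      rcases h with h | h
      · -- 2r ≡ -1, so m ∣ 2r+1
        have : ((2*r + 1 : ℤ) : ZMod m) = 0 := by push_cast [h2r, h]; ring
        obtain ⟨c, hc⟩ := (ZMod.intCast_zmod_eq_zero_iff_dvd _ _).mp this
        have hc1 : c ≤ 1 := by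
          have : (m:ℤ) * c ≤ (m:ℤ) * 1 := by omega
          exact le_of_mul_le_mul_left this hmpos
        have hc2 : -1 ≤ c := by
          have : (m:ℤ) * (-1) ≤ (m:ℤ) * c := by omega
          exact le_of_mul_le_mul_left this hmpos
        interval_cases c <;> rw [Int.natAbs_eq_iff] <;> omega
      · have : ((2*r - 1 : ℤ) : ZMod m) = 0 := by push_cast [h2r, h]; ring
        obtain ⟨c, hc⟩ := (ZMod.intCast_zmod_eq_zero_iff_dvd _ _).mp this
        have hc1 : c ≤ 1 := by
          have : (m:ℤ) * c ≤ (m:ℤ) * 1 := by omega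
          exact le_of_mul_le_mul_left this hmpos
        have hc2 : -1 ≤ c := by
          have : (m:ℤ) * (-1) ≤ (m:ℤ) * c := by omega
          exact le_of_mul_le_mul_left this hmpos
        interval_cases c <;> rw [Int.natAbs_eq_iff] <;> omega
  rw [step1]
  have hinj := hu4.mul_right_injective
  rcases hk with hk | hk
  · constructor
    · rintro (h | h)
      · left; exact hinj (h.trans hk.symm)
      · right
        have : 4 * (-k0) = 1 := by rw [mul_neg, hk]; ring
        exact hinj (h.trans this.symm)
    · rintro (h | h)
      · left; rw [h]; exact hk
      · right; rw [h, mul_neg, hk]; ring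
  · constructor
    · rintro (h | h)
      · right
        have : 4 * (-k0) = -1 := by rw [mul_neg, hk]
        exact hinj (h.trans this.symm)
      · left; exact hinj (h.trans hk.symm)
    · rintro (h | h)
      · right; rw [h]; exact hk
      · left; rw [h, mul_neg, hk]

lemma abs_sin_bound (m : ℕ) [NeZero m] (hm : 3 ≤ m) (hodd : Odd m) (a : ZMod m) :
    |Real.sin (2 * π * a.val / m)| ≤ Real.cos (π / (2*m)) ∧
    (|Real.sin (2 * π * a.val / m)| = Real.cos (π / (2*m)) ↔
      (2*a).valMinAbs.natAbs = m / 2) := by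
  have h2 : m % 2 = 1 := Nat.odd_iff.mp hodd
  have hmR : (0:ℝ) < m := by exact_mod_cast (by omega : 0 < m)
  have hmne : (m:ℝ) ≠ 0 := ne_of_gt hmR
  set v : ℕ := a.val with hv
  set r : ℤ := (2*a).valMinAbs with hrdef
  set n : ℕ := r.natAbs with hn
  have hr : ((r : ℤ) : ZMod m) = 2*a := ZMod.coe_valMinAbs _
  have hb : n ≤ m / 2 := ZMod.natAbs_valMinAbs_le _
  have hn2 : 2*n + 1 ≤ m := by omega
  -- congruence 2v ≡ r mod m
  have hva : ((v : ℕ) : ZMod m) = a := by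
    simp [hv, ZMod.natCast_val, ZMod.cast_id]
  have hcong : (((2*v : ℤ)) : ZMod m) = ((r : ℤ) : ZMod m) := by
    rw [hr]; push_cast [hva]; ring
  have hdvd : (m:ℤ) ∣ (r - 2*v) := ((ZMod.intCast_eq_intCast_iff _ _ _).mp hcong).dvd
  obtain ⟨c, hc⟩ := hdvd
  have hreal : (r:ℝ) - 2*(v:ℝ) = (m:ℝ)*(c:ℝ) := by exact_mod_cast hc
  -- cos of double angle
  have hcos2 : Real.cos (2 * (2 * π * v / m)) = Real.cos (2*π*n/m) := by
    have h1 : (2:ℝ) * (2 * π * v / m) = 2*π*r/m + ((-c : ℤ) : ℝ)*(2*π) := by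
      field_simp
      push_cast
      linear_combination (-1) * hreal
    rw [h1, Real.cos_add_int_mul_two_pi]
    have hnr : ((n:ℕ):ℝ) = |(r:ℝ)| := by rw [hn, Nat.cast_natAbs, Int.cast_abs]
    rw [hnr, show 2*π*|(r:ℝ)|/m = |2*π*(r:ℝ)/m| by
      rw [abs_div, abs_mul, abs_of_nonneg (by positivity : (0:ℝ) ≤ 2*π),
        abs_of_nonneg hmR.le], Real.cos_abs]
  have hpi := Real.pi_pos
  set x : ℝ := 2*π*n/m with hxdef
  set y : ℝ := π - π/m with hydef
  have hnR' : 2*(n:ℝ) + 1 ≤ m := by exact_mod_cast hn2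
  have hx : x ∈ Set.Icc 0 π := by
    constructor
    · positivity
    · rw [hxdef, div_le_iff₀ hmR]; nlinarith
  have hy : y ∈ Set.Icc 0 π := by
    constructor
    · have h1 : π/m ≤ π := by rw [div_le_iff₀ hmR]; nlinarith
      simp [hydef]; linarith
    · have h1 : 0 ≤ π/m := by positivity
      simp [hydef]; linarith
  have hxy : x ≤ y := by
    rw [hxdef, hydef, show π - π/(m:ℝ) = (π*m - π)/m by field_simp, div_le_div_iff₀ hmR hmR]
    nlinarith [mul_nonneg (mul_nonneg hpi.le (by linarith : (0:ℝ) ≤ (m:ℝ) - 1 - 2*(n:ℝ))) hmR.le]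
  have hcosyx : Real.cos y ≤ Real.cos x := by
    rcases eq_or_lt_of_le hxy with h | h
    · rw [h]
    · exact (Real.strictAntiOn_cos hx hy h).le
  have hcosy : Real.cos y = -Real.cos (π/m) := Real.cos_pi_sub _
  have hCsq : Real.cos (π/(2*(m:ℝ))) ^ 2 = 1/2 + Real.cos (π/m)/2 := by
    rw [Real.cos_sq, show 2*(π/(2*(m:ℝ))) = π/m by field_simp]
  have hSsq : Real.sin (2*π*v/m) ^ 2 = 1/2 - Real.cos x / 2 := by
    rw [Real.sin_sq_eq_half_sub, hcos2]
  have hC0 : 0 ≤ Real.cos (π/(2*(m:ℝ))) := by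
    apply Real.cos_nonneg_of_mem_Icc
    constructor
    · have : 0 ≤ π/(2*(m:ℝ)) := by positivity
      linarith
    · rw [div_le_div_iff₀ (by positivity) (by norm_num : (0:ℝ) < 2)]
      nlinarith
  have hineq : Real.sin (2*π*v/m) ^2 ≤ Real.cos (π/(2*(m:ℝ))) ^2 := by
    rw [hSsq, hCsq]; linarith [hcosyx]
  constructor
  · exact abs_le.mpr (abs_le_of_sq_le_sq' hineq hC0)
  · constructor
    · intro h
      by_contra hne
      have hlt : 2*n + 3 ≤ m := by omega
      have hnR2 : 2*(n:ℝ) + 3 ≤ m := by exact_mod_cast hlt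
      have hxylt : x < y := by
        rw [hxdef, hydef, show π - π/(m:ℝ) = (π*m - π)/m by field_simp,
          div_lt_div_iff₀ hmR hmR]
        nlinarith [mul_pos (mul_pos hpi (by linarith : (0:ℝ) < (m:ℝ) - 1 - 2*(n:ℝ))) hmR]
      have hcoslt : Real.cos y < Real.cos x := Real.strictAntiOn_cos hx hy hxylt
      have hsq : Real.sin (2*π*v/m) ^ 2 = Real.cos (π/(2*(m:ℝ))) ^2 := by
        rw [← h, sq_abs]
      rw [hSsq, hCsq] at hsq
      linarith [hcoslt]
    · intro h
      have he : 2*n + 1 = m := by omega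
      have heR : 2*(n:ℝ) + 1 = m := by exact_mod_cast he
      have hxyeq : x = y := by
        rw [hxdef, hydef]
        field_simp
        linear_combination heR
      have hsq : Real.sin (2*π*v/m) ^ 2 = Real.cos (π/(2*(m:ℝ))) ^2 := by
        rw [hSsq, hCsq, hxyeq, hcosy]; ring
      rw [← sq_abs] at hsq
      exact (sq_eq_sq₀ (abs_nonneg _) hC0).mp hsq

theorem stmt_7 (m : ℕ) [NeZero m] (hm : 3 ≤ m) (hodd : Odd m) (a : ZMod m) :
    ‖oneVarSum m a‖ ≤ 2 * Real.cos (Real.pi / (2 * m)) / 2 ∧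
      (‖oneVarSum m a‖ = 2 * Real.cos (Real.pi / (2 * m)) / 2 ↔
        a = (((m + 1) / 4 : ℕ) : ZMod m) ∨ a = -(((m + 1) / 4 : ℕ) : ZMod m)) := by
  have habs : ‖oneVarSum m a‖ = |Real.sin (2 * Real.pi * a.val / m)| := by
    rw [oneVarSum_eq, norm_mul, Complex.norm_I, Complex.norm_real, Real.norm_eq_abs, one_mul]
  have hrhs : 2 * Real.cos (Real.pi / (2 * (m:ℝ))) / 2 = Real.cos (Real.pi / (2 * (m:ℝ))) := by
    ring
  obtain ⟨hle, hiff⟩ := abs_sin_bound m hm hodd a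
  rw [habs, hrhs, hiff]
  exact ⟨hle, eq_char m hm hodd (k0_mul m hm hodd) a⟩
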